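/- Let η be a real number with 0 < η < π/4, set α = π/(π − 2η), and for ζ ∈ (0, 2η) define ρ(ζ) = ( α·(cot(αζ) + cot(α(2η−ζ))) − cot(ζ) − cot(4η−ζ) ) · sin(ζ+2η)·sin(2η−ζ)/sin(4η) and β(ζ) = sin(2η+ζ)·sin(2η−ζ)/(sin(ζ)·sin(4η−ζ)). Let ξ ∈ (0, 2η) be such that deriv β ξ ≠ 0 and deriv β (2η−ξ) ≠ 0. Then ρ(ξ) − β(ξ)·(deriv ρ ξ)/(deriv β ξ) = 1 + (deriv ρ (2η−ξ))/(deriv β (2η−ξ)). -/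

import Mathlib

/-- The x ↔ y symmetry x(ξ) = y(2η−ξ) of the QTHADT arctic curve. -/
theorem stmt18 (η : ℝ) (h1 : 0 < η) (h2 : η < Real.pi/4)
    (α : ℝ) (hα : α = Real.pi / (Real.pi - 2*η))
    (ρ β : ℝ → ℝ)
    (hρ : ρ = fun ζ => (α*(Real.cot (α*ζ) + Real.cot (α*(2*η - ζ))) - Real.cot ζ
        - Real.cot (4*η - ζ))
        * (Real.sin (ζ + 2*η) * Real.sin (2*η - ζ) / Real.sin (4*η)))
    (hβ : β = fun ζ => Real.sin (2*η + ζ) * Real.sin (2*η - ζ)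
        / (Real.sin ζ * Real.sin (4*η - ζ)))
    (ξ : ℝ) (hξ : ξ ∈ Set.Ioo 0 (2*η))
    (hd1 : deriv β ξ ≠ 0) (hd2 : deriv β (2*η - ξ) ≠ 0) :
    ρ ξ - β ξ * (deriv ρ ξ / deriv β ξ) = 1 + deriv ρ (2*η - ξ) / deriv β (2*η - ξ) := by
  have hπ := Real.pi_pos
  have hπ2 : 2*η < Real.pi - 2*η := by linarith
  have hπ2' : 0 < Real.pi - 2*η := by linarith
  have hαpos : 0 < α := by rw [hα]; positivity
  -- basic sine positivity facts on the interval
  have sinpos : ∀ ζ ∈ Set.Ioo 0 (2*η), 0 < Real.sin ζ ∧ 0 < Real.sin (2*η - ζ) ∧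
      0 < Real.sin (2*η + ζ) ∧ 0 < Real.sin (4*η - ζ) ∧ 0 < Real.sin (α*ζ) := by
    intro ζ hz
    obtain ⟨hz0, hz2⟩ := hz
    have hζπ : ζ < Real.pi := by linarith
    have hαζ : α * ζ < Real.pi := by
      rw [hα, div_mul_eq_mul_div, div_lt_iff₀ hπ2']
      nlinarith
    refine ⟨Real.sin_pos_of_pos_of_lt_pi hz0 hζπ,
      Real.sin_pos_of_pos_of_lt_pi (by linarith) (by linarith),
      Real.sin_pos_of_pos_of_lt_pi (by linarith) (by linarith),
      Real.sin_pos_of_pos_of_lt_pi (by linarith) (by linarith),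
      Real.sin_pos_of_pos_of_lt_pi (by positivity) hαζ⟩
  have hs4 : 0 < Real.sin (4*η) := Real.sin_pos_of_pos_of_lt_pi (by linarith) (by linarith)
  have hs4' : Real.sin (4*η) ≠ 0 := ne_of_gt hs4
  have hmem : ∀ ζ ∈ Set.Ioo 0 (2*η), 2*η - ζ ∈ Set.Ioo 0 (2*η) := by
    intro ζ hz; obtain ⟨a, b⟩ := hz; exact ⟨by linarith, by linarith⟩
  -- rewrite ρ with cos/sin
  have hρ' : ρ = fun ζ => (α*(Real.cos (α*ζ)/Real.sin (α*ζ)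
        + Real.cos (α*(2*η - ζ))/Real.sin (α*(2*η - ζ)))
        - Real.cos ζ/Real.sin ζ - Real.cos (4*η - ζ)/Real.sin (4*η - ζ))
        * (Real.sin (ζ + 2*η) * Real.sin (2*η - ζ) / Real.sin (4*η)) := by
    rw [hρ]; funext ζ; simp [Real.cot_eq_cos_div_sin]
  -- differentiability
  have hdβ : ∀ ζ ∈ Set.Ioo 0 (2*η), DifferentiableAt ℝ β ζ := by
    intro ζ hz
    obtain ⟨p1, p2, p3, p4, p5⟩ := sinpos ζ hz
    have h1' : Real.sin ζ ≠ 0 := ne_of_gt p1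
    have h4' : Real.sin (4*η - ζ) ≠ 0 := ne_of_gt p4
    have : Real.sin ζ * Real.sin (4*η - ζ) ≠ 0 := mul_ne_zero h1' h4'
    rw [hβ]; fun_prop (disch := assumption)
  have hdρ : ∀ ζ ∈ Set.Ioo 0 (2*η), DifferentiableAt ℝ ρ ζ := by
    intro ζ hz
    obtain ⟨p1, p2, p3, p4, p5⟩ := sinpos ζ hz
    obtain ⟨q1, q2, q3, q4, q5⟩ := sinpos (2*η - ζ) (hmem ζ hz)
    have h1' : Real.sin ζ ≠ 0 := ne_of_gt p1
    have h4' : Real.sin (4*η - ζ) ≠ 0 := ne_of_gt p4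
    have h5' : Real.sin (α*ζ) ≠ 0 := ne_of_gt p5
    have h6' : Real.sin (α*(2*η - ζ)) ≠ 0 := ne_of_gt q5
    rw [hρ']; fun_prop (disch := assumption)
  -- identity A : β ζ * β (2η - ζ) = 1
  have hA : ∀ ζ ∈ Set.Ioo 0 (2*η), β ζ * β (2*η - ζ) = 1 := by
    intro ζ hz
    obtain ⟨p1, p2, p3, p4, p5⟩ := sinpos ζ hz
    have := p1.ne'; have := p2.ne'; have := p3.ne'; have := p4.ne'
    simp only [hβ]
    rw [show 2*η - (2*η - ζ) = ζ by ring, show 4*η - (2*η - ζ) = 2*η + ζ by ring,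
      show 2*η + (2*η - ζ) = 4*η - ζ by ring]
    have : Real.sin (η*4 - ζ) ≠ 0 := by rw [mul_comm]; exact p4.ne'
    field_simp
  -- identity B : (ρ (2η - ζ) - 1) * β ζ = ρ ζ - 1
  have hB : ∀ ζ ∈ Set.Ioo 0 (2*η), (ρ (2*η - ζ) - 1) * β ζ = ρ ζ - 1 := by
    intro ζ hz
    obtain ⟨p1, p2, p3, p4, p5⟩ := sinpos ζ hz
    obtain ⟨q1, q2, q3, q4, q5⟩ := sinpos (2*η - ζ) (hmem ζ hz)
    have e1 : Real.sin (4*η) = Real.sin ζ * Real.cos (4*η - ζ)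
        + Real.cos ζ * Real.sin (4*η - ζ) := by
      rw [← Real.sin_add]; congr 1; ring
    have e2 : Real.sin (4*η) = Real.sin (2*η - ζ) * Real.cos (2*η + ζ)
        + Real.cos (2*η - ζ) * Real.sin (2*η + ζ) := by
      rw [← Real.sin_add]; congr 1; ring
    simp only [hρ', hβ]
    rw [show 2*η - (2*η - ζ) = ζ by ring, show 4*η - (2*η - ζ) = 2*η + ζ by ring,
      show (2*η - ζ) + 2*η = 4*η - ζ by ring, show ζ + 2*η = 2*η + ζ by ring]
    have h1' : Real.sin ζ ≠ 0 := ne_of_gt p1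
    have h2' : Real.sin (2*η - ζ) ≠ 0 := ne_of_gt p2
    have h3' : Real.sin (2*η + ζ) ≠ 0 := ne_of_gt p3
    have h4' : Real.sin (4*η - ζ) ≠ 0 := ne_of_gt p4
    have h5' : Real.sin (α*ζ) ≠ 0 := ne_of_gt p5
    have h6' : Real.sin (α*(2*η - ζ)) ≠ 0 := ne_of_gt q5
    have hc1 : Real.cos ζ/Real.sin ζ + Real.cos (4*η - ζ)/Real.sin (4*η - ζ)
        = Real.sin (4*η) / (Real.sin ζ * Real.sin (4*η - ζ)) := by
      rw [div_add_div _ _ h1' h4', e1]; ring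
    have hc2 : Real.cos (2*η - ζ)/Real.sin (2*η - ζ) + Real.cos (2*η + ζ)/Real.sin (2*η + ζ)
        = Real.sin (4*η) / (Real.sin (2*η - ζ) * Real.sin (2*η + ζ)) := by
      rw [div_add_div _ _ h2' h3', e2]; ring
    rw [sub_sub, sub_sub, hc1, hc2]
    have : Real.sin (η*4 - ζ) ≠ 0 := by rw [mul_comm]; exact p4.ne'
    have : Real.sin (η*4) ≠ 0 := by rw [mul_comm]; exact hs4'
    field_simp
    ring
  -- derivative manipulations at ξ
  obtain ⟨p1, p2, p3, p4, p5⟩ := sinpos ξ hξ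
  have hmξ : 2*η - ξ ∈ Set.Ioo 0 (2*η) := hmem ξ hξ
  have dβξ : DifferentiableAt ℝ β ξ := hdβ ξ hξ
  have dβs : DifferentiableAt ℝ β (2*η - ξ) := hdβ _ hmξ
  have dρs : DifferentiableAt ℝ ρ (2*η - ξ) := hdρ _ hmξ
  have dsub : DifferentiableAt ℝ (fun ζ : ℝ => 2*η - ζ) ξ :=
    (differentiableAt_const _).sub differentiableAt_id
  have dβc : DifferentiableAt ℝ (fun ζ => β (2*η - ζ)) ξ := DifferentiableAt.comp ξ dβs dsub
  have dρc : DifferentiableAt ℝ (fun ζ => ρ (2*η - ζ)) ξ := DifferentiableAt.comp ξ dρs dsub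
  have hnhds : Set.Ioo 0 (2*η) ∈ nhds ξ := isOpen_Ioo.mem_nhds hξ
  have hAd : deriv β ξ * β (2*η - ξ) + β ξ * -deriv β (2*η - ξ) = 0 := by
    have hev : (fun ζ => β ζ * β (2*η - ζ)) =ᶠ[nhds ξ] (fun _ => 1) := by
      filter_upwards [hnhds] with ζ hζ using hA ζ hζ
    have h := hev.deriv_eq
    rw [deriv_const, deriv_fun_mul dβξ dβc, deriv_comp_const_sub] at h
    exact h
  have hBd : -deriv ρ (2*η - ξ) * β ξ + (ρ (2*η - ξ) - 1) * deriv β ξ = deriv ρ ξ := by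
    have hev : (fun ζ => (ρ (2*η - ζ) - 1) * β ζ) =ᶠ[nhds ξ] (fun ζ => ρ ζ - 1) := by
      filter_upwards [hnhds] with ζ hζ using hB ζ hζ
    have h := hev.deriv_eq
    rw [deriv_fun_mul (dρc.sub_const 1) dβξ, deriv_sub_const, deriv_sub_const,
      deriv_comp_const_sub] at h
    exact h
  have hA0 := hA ξ hξ
  have hB0 := hB ξ hξ
  have hβ0 : β ξ ≠ 0 := by
    have : 0 < β ξ := by rw [hβ]; exact div_pos (mul_pos p3 p2) (mul_pos p1 p4)
    exact ne_of_gt this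
  field_simp
  linear_combination (β ξ * deriv β (2*η - ξ)) * hBd
    - (deriv β ξ * deriv β (2*η - ξ)) * hB0
    - (deriv ρ (2*η - ξ) * β ξ) * hAd
    + (deriv ρ (2*η - ξ) * deriv β ξ) * hA0
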